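/- Let H = (V,E) be a hypertree with edges e₁,…,e_k, and suppose each edge e_i carries a partial order <_i on its vertices. Then the transitive closure of the union of the relations <_i is a partial order on V (i.e., it is irreflexive/antisymmetric). -/

import Mathlib

/-- A path in the hypergraph with edge set `E`: a sequence
`v₀, e₀, v₁, e₁, …, e_{m-1}, v_m` with distinct edges `eᵢ ∈ E`, distinct vertices
(except that the first and last vertex may coincide), and `vᵢ, vᵢ₊₁ ∈ eᵢ`. -/
structure HPath {V : Type} (E : Set (Set V)) where
  m : ℕ
  vert : Fin (m + 1) → V
  edge : Fin m → Set V
  edge_mem : ∀ i, edge i ∈ E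
  edge_inj : Function.Injective edge
  vert_almost_inj : ∀ i j : Fin (m + 1), vert i = vert j →
    i = j ∨ (i = 0 ∧ j = Fin.last m) ∨ (j = 0 ∧ i = Fin.last m)
  mem_left : ∀ i : Fin m, vert i.castSucc ∈ edge i
  mem_right : ∀ i : Fin m, vert i.succ ∈ edge i

/-- The first vertex of a path. -/
def HPath.first {V : Type} {E : Set (Set V)} (p : HPath E) : V := p.vert 0

/-- The last vertex of a path. -/
def HPath.last {V : Type} {E : Set (Set V)} (p : HPath E) : V := p.vert (Fin.last p.m)

/-- A cycle is a path with `v₀ = v_m` and more than one edge. -/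
def HPath.IsCycle {V : Type} {E : Set (Set V)} (p : HPath E) : Prop :=
  p.first = p.last ∧ 1 < p.m

/-- The hypergraph with edge set `E` is connected on the vertex set `W`. -/
def ConnectedOn {V : Type} (W : Set V) (E : Set (Set V)) : Prop :=
  ∀ v ∈ W, ∀ v' ∈ W, ∃ p : HPath E, p.first = v ∧ p.last = v'

/-- `(W, E)` is a hypertree: every edge is a subset of `W` of size at least 2,
the hypergraph is connected on `W`, and it has no cycles. -/
def IsHypertreeOn {V : Type} (W : Set V) (E : Set (Set V)) : Prop :=
  (∀ e ∈ E, e ⊆ W ∧ 2 ≤ e.ncard) ∧ ConnectedOn W E ∧ ∀ p : HPath E, ¬ p.IsCycle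


private lemma mod_succ_eq (t n : ℕ) (hn : 0 < n) :
    (t + 1) % n = if t % n + 1 = n then 0 else t % n + 1 := by
  have h1 : (t % n + 1) % n = (t + 1) % n := Nat.ModEq.add_right 1 (Nat.mod_modEq t n)
  by_cases h : t % n + 1 = n
  · rw [if_pos h, ← h1, h, Nat.mod_self]
  · have hlt : t % n + 1 < n := lt_of_le_of_ne (Nat.succ_le_of_lt (Nat.mod_lt t hn)) h
    rw [if_neg h, ← h1, Nat.mod_eq_of_lt hlt]

private lemma periodic_eq_mod {α : Type*} (f : ℕ → α) (n : ℕ) (hn : 0 < n)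
    (h : ∀ t, f (t + n) = f t) : ∀ t, f t = f (t % n) := by
  intro t
  induction t using Nat.strong_induction_on with
  | _ t ih =>
    rcases lt_or_ge t n with h' | h'
    · rw [Nat.mod_eq_of_lt h']
    · have e1 : t = (t - n) + n := by omega
      rw [e1, h, Nat.add_mod_right]
      exact ih (t - n) (by omega)

private lemma add_mod_cancel' (c a b n : ℕ) (ha : a < n) (hb : b < n)
    (h : (c + a) % n = (c + b) % n) : a = b := by
  have h2 : a % n = b % n := Nat.ModEq.add_left_cancel' c h
  rwa [Nat.mod_eq_of_lt ha, Nat.mod_eq_of_lt hb] at h2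

private lemma transGen_chain {V : Type} {E : Set (Set V)} {r : Set V → V → V → Prop}
    {a b : V} (h : Relation.TransGen (fun x y => ∃ e ∈ E, r e x y) a b) :
    ∃ n, 1 ≤ n ∧ ∃ f : ℕ → V, f 0 = a ∧ f n = b ∧
      ∀ t < n, ∃ e ∈ E, r e (f t) (f (t + 1)) := by
  induction h with
  | @single c h =>
    refine ⟨1, le_refl _, fun t => if t = 0 then a else c, by simp, by simp, ?_⟩
    intro t ht
    interval_cases t
    simpa using h
  | @tail b c h1 h2 ih =>
    obtain ⟨n, hn, f, hf0, hfn, hstep⟩ := ih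
    refine ⟨n + 1, by omega, fun t => if t = n + 1 then c else f t,
      by simp [hf0], by simp, ?_⟩
    intro t ht
    rcases Nat.lt_or_ge t n with h' | h'
    · have e1 : t ≠ n + 1 := by omega
      have e2 : t + 1 ≠ n + 1 := by omega
      simpa [e1, e2, show t ≠ n by omega] using hstep t h'
    · have e3 : t = n := by omega
      have e1 : t ≠ n + 1 := by omega
      simpa [e1, e3, hfn] using h2


/-- Let `(V, E)` be a hypertree and suppose each edge `e ∈ E`
carries a strict partial order `r e` on its vertices. Then the transitive closure
of the union of these relations is irreflexive (hence a strict partial order). -/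
theorem transClosure_strictOrder {V : Type} [Fintype V] (E : Set (Set V))
    (hT : IsHypertreeOn Set.univ E)
    (r : Set V → V → V → Prop)
    (hdom : ∀ e ∈ E, ∀ x y, r e x y → x ∈ e ∧ y ∈ e)
    (hso : ∀ e ∈ E, IsStrictOrder V (r e)) :
    ∀ x : V, ¬ Relation.TransGen (fun x y => ∃ e ∈ E, r e x y) x x := by
  classical
  intro x hx
  obtain ⟨n1, hn1, f, hf0, hfn, hstep⟩ := transGen_chain hx
  have hch : ∀ t, ∃ e, t < n1 → e ∈ E ∧ r e (f t) (f (t + 1)) := by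
    intro t
    by_cases ht : t < n1
    · obtain ⟨e, he, hre⟩ := hstep t ht
      exact ⟨e, fun _ => ⟨he, hre⟩⟩
    · exact ⟨∅, fun h => absurd h ht⟩
  choose g hg using hch
  set P : ℕ → Prop := fun n => 1 ≤ n ∧ ∃ xx : ℕ → V, ∃ ee : ℕ → Set V,
    (∀ t, xx (t + n) = xx t) ∧ (∀ t, ee (t + n) = ee t) ∧ (∀ t, ee t ∈ E) ∧
    (∀ t, r (ee t) (xx t) (xx (t + 1))) with hPdef
  have hpos1 : 0 < n1 := hn1
  have hP1 : P n1 := by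
    refine ⟨hn1, fun t => f (t % n1), fun t => g (t % n1),
      fun t => by show f ((t + n1) % n1) = f (t % n1); rw [Nat.add_mod_right],
      fun t => by show g ((t + n1) % n1) = g (t % n1); rw [Nat.add_mod_right],
      fun t => (hg (t % n1) (Nat.mod_lt t hpos1)).1, fun t => ?_⟩
    show r (g (t % n1)) (f (t % n1)) (f ((t + 1) % n1))
    have hs : t % n1 < n1 := Nat.mod_lt t hpos1
    have hst := (hg (t % n1) hs).2
    by_cases hc : t % n1 + 1 = n1
    · rw [mod_succ_eq t n1 hpos1, if_pos hc]
      have : f (t % n1 + 1) = f 0 := by rw [hc, hfn, ← hf0]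
      rwa [this] at hst
    · rw [mod_succ_eq t n1 hpos1, if_neg hc]
      exact hst
  have hex : ∃ n, P n := ⟨n1, hP1⟩
  obtain ⟨hnge, xx, ee, hxp, hep, hmem, hstp⟩ := Nat.find_spec hex
  set n := Nat.find hex with hndef
  have hnpos : 0 < n := hnge
  have hmin : ∀ m, m < n → ¬ P m := fun m hm => Nat.find_min hex hm
  have hxmod : ∀ t, xx t = xx (t % n) := periodic_eq_mod xx n hnpos hxp
  have hirr : ∀ t y, ¬ r (ee t) y y := fun t y h =>
    haveI := hso _ (hmem t); irrefl_of (r (ee t)) y h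
  have htrans : ∀ t a b c, r (ee t) a b → r (ee t) b c → r (ee t) a c :=
    fun t a b c h1 h2 => (hso _ (hmem t)).toIsTrans.trans a b c h1 h2
  have hm1 : ∀ t, xx t ∈ ee t := fun t => (hdom _ (hmem t) _ _ (hstp t)).1
  have hm2 : ∀ t, xx (t + 1) ∈ ee t := fun t => (hdom _ (hmem t) _ _ (hstp t)).2
  -- n ≥ 2
  have hn2 : 2 ≤ n := by
    by_contra hcon
    have hn1'' : n = 1 := by omega
    have e0 : xx 1 = xx 0 := by simpa [hn1''] using hxp 0
    have := hstp 0
    rw [e0] at this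
    exact hirr 0 (xx 0) this
  -- subcycle from repeated vertex
  have hsub : ∀ i d, 1 ≤ d → xx i = xx (i + d) → P d := by
    intro i d hd hxid
    have hdpos : 0 < d := hd
    refine ⟨hd, fun t => xx (i + t % d), fun t => ee (i + t % d),
      fun t => by show xx (i + (t + d) % d) = xx (i + t % d); rw [Nat.add_mod_right],
      fun t => by show ee (i + (t + d) % d) = ee (i + t % d); rw [Nat.add_mod_right],
      fun t => hmem _, fun t => ?_⟩
    show r (ee (i + t % d)) (xx (i + t % d)) (xx (i + (t + 1) % d))
    have hslt : t % d < d := Nat.mod_lt t hdpos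
    have hst := hstp (i + t % d)
    by_cases hc : t % d + 1 = d
    · rw [mod_succ_eq t d hdpos, if_pos hc]
      have hv : xx (i + t % d + 1) = xx (i + 0) := by
        rw [show i + t % d + 1 = i + d by omega, ← hxid, Nat.add_zero]
      rwa [hv] at hst
    · rw [mod_succ_eq t d hdpos, if_neg hc,
        show i + (t % d + 1) = i + t % d + 1 by omega]
      exact hst
  -- distinct vertices
  have key : ∀ a b, a % n < b % n → xx a ≠ xx b := by
    intro a b hlt heq
    have h1 : xx (a % n) = xx (b % n) := (hxmod a).symm.trans (heq.trans (hxmod b))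
    have hbn : b % n < n := Nat.mod_lt b hnpos
    have hP := hsub (a % n) (b % n - a % n) (by omega)
      (by rw [show a % n + (b % n - a % n) = b % n by omega]; exact h1)
    exact hmin (b % n - a % n) (by omega) hP
  have hvdist : ∀ a b, xx a = xx b → a % n = b % n := by
    intro a b hab
    rcases Nat.lt_trichotomy (a % n) (b % n) with h | h | h
    · exact absurd hab (key a b h)
    · exact h
    · exact absurd hab.symm (key b a h)
  -- no consecutive equal edges
  have hmerge : ∀ i, ee i ≠ ee (i + 1) := by
    intro i hee
    have hpos : 0 < n - 1 := by omega
    have hP : P (n - 1) := by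
      refine ⟨hpos, fun t => xx (i + 2 + t % (n - 1)),
        fun t => if t % (n - 1) = n - 2 then ee i else ee (i + 2 + t % (n - 1)),
        fun t => by
          show xx (i + 2 + (t + (n - 1)) % (n - 1)) = xx (i + 2 + t % (n - 1))
          rw [Nat.add_mod_right],
        fun t => by
          show (if (t + (n - 1)) % (n - 1) = n - 2 then ee i
              else ee (i + 2 + (t + (n - 1)) % (n - 1))) =
            (if t % (n - 1) = n - 2 then ee i else ee (i + 2 + t % (n - 1)))
          rw [Nat.add_mod_right],
        fun t => ?_, fun t => ?_⟩
      · show (if t % (n - 1) = n - 2 then ee i else ee (i + 2 + t % (n - 1))) ∈ E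
        by_cases h : t % (n - 1) = n - 2 <;> simp [h, hmem]
      · show r (if t % (n - 1) = n - 2 then ee i else ee (i + 2 + t % (n - 1)))
          (xx (i + 2 + t % (n - 1))) (xx (i + 2 + (t + 1) % (n - 1)))
        have hslt : t % (n - 1) < n - 1 := Nat.mod_lt t hpos
        by_cases hc : t % (n - 1) = n - 2
        · have hc' : t % (n - 1) + 1 = n - 1 := by omega
          rw [if_pos hc, mod_succ_eq t (n - 1) hpos, if_pos hc']
          have hxi : xx (i + 2 + t % (n - 1)) = xx i := by
            rw [show i + 2 + t % (n - 1) = i + n by omega, hxp i]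
          rw [hxi, Nat.add_zero]
          have s1 := hstp i
          have s2 := hstp (i + 1)
          rw [← hee, show i + 1 + 1 = i + 2 by omega] at s2
          exact htrans i _ _ _ s1 s2
        · have hc' : t % (n - 1) + 1 ≠ n - 1 := by omega
          rw [if_neg hc, mod_succ_eq t (n - 1) hpos, if_neg hc',
            show i + 2 + (t % (n - 1) + 1) = (i + 2 + t % (n - 1)) + 1 by omega]
          exact hstp (i + 2 + t % (n - 1))
    exact hmin (n - 1) (by omega) hP
  -- minimal edge-repeat distance
  have hexd : ∃ d, 1 ≤ d ∧ ∃ i, ee i = ee (i + d) := ⟨n, by omega, 0, (hep 0).symm⟩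
  obtain ⟨hd1, i, hedup⟩ := Nat.find_spec hexd
  set d := Nat.find hexd with hddef
  have hdn : d ≤ n := Nat.find_min' hexd ⟨by omega, 0, (hep 0).symm⟩
  have hHmin : ∀ s a, 1 ≤ a → a < d → ee s ≠ ee (s + a) :=
    fun s a h1 h2 heq => Nat.find_min hexd h2 ⟨h1, s, heq⟩
  have hd2 : 2 ≤ d := by
    by_contra hcon
    have hd1' : d = 1 := by omega
    rw [hd1'] at hedup
    exact hmerge i hedup
  -- build a hypergraph cycle of length d
  have hvert_inj : ∀ a b : ℕ, a < d → b < d → xx (i + 1 + a) = xx (i + 1 + b) → a = b := by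
    intro a b ha hb hab
    exact add_mod_cancel' (i + 1) a b n (by omega) (by omega)
      (by rw [← Nat.mod_eq_of_lt (show a < n by omega), ← Nat.mod_eq_of_lt (show b < n by omega)] at * <;>
          exact hvdist _ _ hab)
  let p : HPath E :=
    { m := d
      vert := fun t => xx (i + 1 + (t : ℕ) % d)
      edge := fun t => if (t : ℕ) = d - 1 then ee i else ee (i + 1 + (t : ℕ))
      edge_mem := by
        intro t
        by_cases h : (t : ℕ) = d - 1 <;> simp [h, hmem]
      edge_inj := by
        intro t t' h
        simp only at h
        by_cases h1 : (t : ℕ) = d - 1 <;> by_cases h2 : (t' : ℕ) = d - 1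
        · exact Fin.ext (h1.trans h2.symm)
        · rw [if_pos h1, if_neg h2] at h
          have ht' : (t' : ℕ) < d := t'.isLt
          exact absurd (by rw [show i + (1 + (t' : ℕ)) = i + 1 + (t' : ℕ) by omega]; exact h)
            (hHmin i (1 + (t' : ℕ)) (by omega) (by omega))
        · rw [if_neg h1, if_pos h2] at h
          have ht : (t : ℕ) < d := t.isLt
          exact absurd (by rw [show i + (1 + (t : ℕ)) = i + 1 + (t : ℕ) by omega]; exact h.symm)
            (hHmin i (1 + (t : ℕ)) (by omega) (by omega))
        · rw [if_neg h1, if_neg h2] at h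
          rcases Nat.lt_trichotomy (t : ℕ) (t' : ℕ) with hlt | heq | hgt
          · have ht' : (t' : ℕ) < d := t'.isLt
            exact absurd (by rw [show i + 1 + (t' : ℕ) = i + 1 + (t : ℕ) + ((t' : ℕ) - (t : ℕ)) by omega] at h; exact h)
              (hHmin (i + 1 + (t : ℕ)) ((t' : ℕ) - (t : ℕ)) (by omega) (by omega))
          · exact Fin.ext heq
          · have ht : (t : ℕ) < d := t.isLt
            exact absurd (by rw [show i + 1 + (t : ℕ) = i + 1 + (t' : ℕ) + ((t : ℕ) - (t' : ℕ)) by omega] at h; exact h.symm)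
              (hHmin (i + 1 + (t' : ℕ)) ((t : ℕ) - (t' : ℕ)) (by omega) (by omega))
      vert_almost_inj := by
        intro s t h
        have hs : (s : ℕ) ≤ d := by have := s.isLt; omega
        have ht : (t : ℕ) ≤ d := by have := t.isLt; omega
        have hmm : (s : ℕ) % d = (t : ℕ) % d :=
          hvert_inj _ _ (Nat.mod_lt _ (by omega)) (Nat.mod_lt _ (by omega)) h
        by_cases hsd : (s : ℕ) = d <;> by_cases htd : (t : ℕ) = d
        · exact Or.inl (Fin.ext (hsd.trans htd.symm))
        · have h1 : (s : ℕ) % d = 0 := by rw [hsd, Nat.mod_self]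
          have h2 : (t : ℕ) % d = (t : ℕ) := Nat.mod_eq_of_lt (by omega)
          have h3 : (t : ℕ) = 0 := by omega
          exact Or.inr (Or.inr ⟨Fin.ext (by simp [h3]), Fin.ext (by simp [hsd, Fin.val_last])⟩)
        · have h1 : (t : ℕ) % d = 0 := by rw [htd, Nat.mod_self]
          have h2 : (s : ℕ) % d = (s : ℕ) := Nat.mod_eq_of_lt (by omega)
          have h3 : (s : ℕ) = 0 := by omega
          exact Or.inr (Or.inl ⟨Fin.ext (by simp [h3]), Fin.ext (by simp [htd, Fin.val_last])⟩)
        · have h1 : (s : ℕ) % d = (s : ℕ) := Nat.mod_eq_of_lt (by omega)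
          have h2 : (t : ℕ) % d = (t : ℕ) := Nat.mod_eq_of_lt (by omega)
          exact Or.inl (Fin.ext (by omega))
      mem_left := by
        intro t
        have htv : ((t.castSucc : Fin (d + 1)) : ℕ) = (t : ℕ) := rfl
        have htd : (t : ℕ) < d := t.isLt
        show xx (i + 1 + ((t.castSucc : Fin (d + 1)) : ℕ) % d) ∈
          (if (t : ℕ) = d - 1 then ee i else ee (i + 1 + (t : ℕ)))
        rw [htv, Nat.mod_eq_of_lt htd]
        by_cases h : (t : ℕ) = d - 1
        · rw [if_pos h, hedup, show i + 1 + (t : ℕ) = i + d by omega]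
          exact hm1 (i + d)
        · rw [if_neg h]
          exact hm1 (i + 1 + (t : ℕ))
      mem_right := by
        intro t
        have htv : ((t.succ : Fin (d + 1)) : ℕ) = (t : ℕ) + 1 := rfl
        have htd : (t : ℕ) < d := t.isLt
        show xx (i + 1 + ((t.succ : Fin (d + 1)) : ℕ) % d) ∈
          (if (t : ℕ) = d - 1 then ee i else ee (i + 1 + (t : ℕ)))
        rw [htv]
        by_cases h : (t : ℕ) = d - 1
        · rw [if_pos h, show (t : ℕ) + 1 = d by omega, Nat.mod_self, Nat.add_zero]
          exact hm2 i
        · rw [if_neg h, Nat.mod_eq_of_lt (show (t : ℕ) + 1 < d by omega),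
            show i + 1 + ((t : ℕ) + 1) = i + 1 + (t : ℕ) + 1 by omega]
          exact hm2 (i + 1 + (t : ℕ))
      }
  refine hT.2.2 p ⟨?_, hd2⟩
  show p.vert 0 = p.vert (Fin.last d)
  show xx (i + 1 + ((0 : Fin (d + 1)) : ℕ) % d) = xx (i + 1 + ((Fin.last d : Fin (d + 1)) : ℕ) % d)
  rw [Fin.val_zero, Fin.val_last, Nat.zero_mod, Nat.mod_self]
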